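/- Let α ≥ 0 be a real number and let g(s) = −√(s²+1)/(s+α) with √ the principal branch of the complex square root. Then for every δ > 0 there exists s ∈ ℂ with Re(s) > 0 such that −δ < Re(g(s)) < 0. In particular, there is no uniform lower bound on the damping rate |Re(g(s))| over the right half-plane Re(s) > 0. -/

import Mathlib

/-- For `α ≥ 0`, the real part of `g(s) = −√(s²+1)/(s+α)` gets arbitrarily close to `0`
from below over the right half-plane: no uniform lower bound on the damping rate. -/
theorem pml1_no_uniform_damping (α : ℝ) (hα : 0 ≤ α) :
    ∀ δ : ℝ, 0 < δ → ∃ s : ℂ, 0 < s.re ∧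
      -δ < (-((s ^ 2 + 1) ^ (1/2 : ℂ)) / (s + (α : ℂ))).re ∧
      (-((s ^ 2 + 1) ^ (1/2 : ℂ)) / (s + (α : ℂ))).re < 0 := by
  intro δ hδ
  set ε : ℝ := min 1 (δ ^ 2 / 13) with hεdef
  have hε0 : 0 < ε := lt_min one_pos (by positivity)
  have hε1 : ε ≤ 1 := min_le_left _ _
  have hε2 : ε ≤ δ ^ 2 / 13 := min_le_right _ _
  set s : ℂ := (ε : ℂ) + Complex.I with hsdef
  refine ⟨s, by simp [hsdef, hε0], ?_⟩
  set z : ℂ := s ^ 2 + 1 with hzdef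
  have hzre : z.re = ε ^ 2 := by
    simp [hzdef, hsdef, pow_two, Complex.add_re, Complex.add_im, Complex.mul_re, Complex.mul_im]
  have hzim : z.im = 2 * ε := by
    simp [hzdef, hsdef, pow_two, Complex.add_re, Complex.add_im, Complex.mul_re, Complex.mul_im]
    ring
  have habs_le : ‖z‖ ≤ 3 * ε := by
    calc ‖z‖ ≤ |z.re| + |z.im| := Complex.norm_le_abs_re_add_abs_im z
      _ = ε ^ 2 + 2 * ε := by
          rw [hzre, hzim, abs_of_nonneg (by positivity), abs_of_nonneg (by positivity)]
      _ ≤ 3 * ε := by nlinarith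
  have habs_ge : ε ^ 2 ≤ ‖z‖ := hzre ▸ Complex.re_le_norm z
  have h12 : (1 / 2 : ℂ) = (2⁻¹ : ℂ) := by norm_num
  rw [h12]
  have hwre : (z ^ (2⁻¹ : ℂ)).re = Real.sqrt ((‖z‖ + z.re) / 2) :=
    Complex.cpow_inv_two_re z
  have hwim : (z ^ (2⁻¹ : ℂ)).im = Real.sqrt ((‖z‖ - z.re) / 2) :=
    Complex.cpow_inv_two_im_eq_sqrt (by rw [hzim]; positivity)
  have hwr_pos : 0 < (z ^ (2⁻¹ : ℂ)).re := by
    rw [hwre]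
    apply Real.sqrt_pos.2
    rw [hzre]
    nlinarith
  have hwi_nonneg : 0 ≤ (z ^ (2⁻¹ : ℂ)).im := by rw [hwim]; exact Real.sqrt_nonneg _
  have hsqrt3e : Real.sqrt (3 * ε) < δ / 2 := by
    rw [show δ / 2 = Real.sqrt ((δ / 2) ^ 2) by rw [Real.sqrt_sq (by positivity)]]
    apply Real.sqrt_lt_sqrt (by positivity)
    nlinarith
  have hwr_le : (z ^ (2⁻¹ : ℂ)).re ≤ Real.sqrt (3 * ε) := by
    rw [hwre]
    apply Real.sqrt_le_sqrt
    rw [hzre]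
    nlinarith
  have hwi_le : (z ^ (2⁻¹ : ℂ)).im ≤ Real.sqrt (3 * ε) := by
    rw [hwim]
    apply Real.sqrt_le_sqrt
    rw [hzre]
    nlinarith
  have hvre : (s + (α : ℂ)).re = ε + α := by simp [hsdef]
  have hvim : (s + (α : ℂ)).im = 1 := by simp [hsdef]
  have hD : Complex.normSq (s + (α : ℂ)) = (ε + α) ^ 2 + 1 := by
    rw [Complex.normSq_apply, hvre, hvim]; ring
  have hre : (-(z ^ (2⁻¹ : ℂ)) / (s + (α : ℂ))).re
      = -((z ^ (2⁻¹ : ℂ)).re * (ε + α) + (z ^ (2⁻¹ : ℂ)).im) / ((ε + α) ^ 2 + 1) := by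
    rw [Complex.div_re, hD, hvre, hvim]
    simp only [Complex.neg_re, Complex.neg_im]
    ring
  rw [hre]
  set wr : ℝ := (z ^ (2⁻¹ : ℂ)).re
  set wi : ℝ := (z ^ (2⁻¹ : ℂ)).im
  have hDpos : (0 : ℝ) < (ε + α) ^ 2 + 1 := by positivity
  have hnum_pos : 0 < wr * (ε + α) + wi := by nlinarith
  constructor
  · rw [neg_div, neg_lt_neg_iff, div_lt_iff₀ hDpos]
    have h1 : wr * (ε + α) + wi ≤ Real.sqrt (3 * ε) * ((ε + α) + 1) := by
      nlinarith [Real.sqrt_nonneg (3 * ε)]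
    have h2 : (ε + α) + 1 ≤ 2 * ((ε + α) ^ 2 + 1) := by nlinarith
    calc wr * (ε + α) + wi ≤ Real.sqrt (3 * ε) * ((ε + α) + 1) := h1
      _ ≤ Real.sqrt (3 * ε) * (2 * ((ε + α) ^ 2 + 1)) :=
          mul_le_mul_of_nonneg_left h2 (Real.sqrt_nonneg _)
      _ < (δ / 2) * (2 * ((ε + α) ^ 2 + 1)) :=
          mul_lt_mul_of_pos_right hsqrt3e (by positivity)
      _ = δ * ((ε + α) ^ 2 + 1) := by ring
  · apply div_neg_of_neg_of_pos _ hDpos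
    linarith
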